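/- Fix integers T ≥ 1 and k ≥ 0, predictions w_1,…,w_T ∈ W and gradients g_1,…,g_T ∈ E*, and let P be the set of passed rounds of the Top-k Filter with parameter k. Let S ⊆ [T] satisfy T − |S| ≤ k, let u ∈ W, and define D(u,S) = max{‖w_t − u‖ : t ∈ [T], ‖g_t‖_* ≤ 2G(S)} (equal to 0 if no such t exists). If B ∈ ℝ is such that Σ_{t∈P} g_t(w_t − u) ≤ B, then the linearized robust regret satisfies Σ_{t∈S} g_t(w_t − u) ≤ B + 4·D(u,S)·G(S)·(k+1). -/

import Mathlib

/-!
Top-k Filter (Algorithm 1): rounds are indexed `0, 1, …, T-1`.  For round `t`,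
`topkThresh g k t` is the `(k+1)`-th largest value among `‖g 0‖, …, ‖g t‖`
(`0` if fewer than `k+1` values are available), i.e. the minimum of the list
maintained by the algorithm.  Round `t` is passed iff `‖g t‖ ≤ 2 * topkThresh g k t`.
Gradients live in the continuous dual `E →L[ℝ] ℝ`, whose operator norm is the dual norm.
-/

/-- The `(k+1)`-th largest element of a list of reals ( `0` if the list has fewer
than `k+1` elements). -/
noncomputable def kthLargest (k : ℕ) (l : List ℝ) : ℝ :=
  (l.mergeSort (fun a b => decide (b ≤ a))).getD k 0

/-- `m_t`: the `(k+1)`-th largest value among `‖g 0‖, …, ‖g t‖`. -/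
noncomputable def topkThresh {E : Type*} [NormedAddCommGroup E] [NormedSpace ℝ E]
    (g : ℕ → E →L[ℝ] ℝ) (k t : ℕ) : ℝ :=
  kthLargest k ((List.range (t + 1)).map fun s => ‖g s‖)

/-- The set of rounds in `{0, …, T-1}` passed on to ALG by the Top-k Filter. -/
noncomputable def topkPassed {E : Type*} [NormedAddCommGroup E] [NormedSpace ℝ E]
    (g : ℕ → E →L[ℝ] ℝ) (k T : ℕ) : Finset ℕ :=
  (Finset.range T).filter fun t => ‖g t‖ ≤ 2 * topkThresh g k t

/-- `G(S) = max_{t ∈ S} ‖g t‖` (with `G(∅) = 0`). -/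
noncomputable def gradMax {E : Type*} [NormedAddCommGroup E] [NormedSpace ℝ E]
    (g : ℕ → E →L[ℝ] ℝ) (S : Finset ℕ) : ℝ :=
  ((S.sup fun t => ‖g t‖₊ : NNReal) : ℝ)

/-- `D(u,S) = max{‖w t - u‖ : t ∈ [T], ‖g t‖ ≤ 2 G(S)}` (with value `0` if no such `t`). -/
noncomputable def distMax {E : Type*} [NormedAddCommGroup E] [NormedSpace ℝ E]
    (g : ℕ → E →L[ℝ] ℝ) (w : ℕ → E) (u : E) (T : ℕ) (S : Finset ℕ) : ℝ :=
  ((((Finset.range T).filter fun t => ‖g t‖ ≤ 2 * gradMax g S).sup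
      fun t => ‖w t - u‖₊ : NNReal) : ℝ)

/-! ### Auxiliary lemmas -/

lemma mergeSortDesc_sorted (l : List ℝ) :
    (l.mergeSort (fun a b => decide (b ≤ a))).Pairwise (fun a b : ℝ => b ≤ a) := by
  have h := List.pairwise_mergeSort (le := fun a b : ℝ => decide (b ≤ a))
    (by intro a b c h1 h2; simp at *; linarith)
    (by intro a b; simpa using le_total b a) l
  exact h.imp (by intro a b h; simpa using h)

lemma mergeSortDesc_anti (l : List ℝ) {i j : ℕ}
    (hj : j < (l.mergeSort (fun a b => decide (b ≤ a))).length) (hij : i ≤ j) :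
    (l.mergeSort (fun a b => decide (b ≤ a)))[j]
      ≤ (l.mergeSort (fun a b => decide (b ≤ a)))[i]'(lt_of_le_of_lt hij hj) := by
  rcases eq_or_lt_of_le hij with rfl | hlt
  · exact le_refl _
  · exact (List.pairwise_iff_getElem.1 (mergeSortDesc_sorted l)) i j _ hj hlt

/-- If the `(k+1)`-th largest element of `l` is `< c`, then at most `k` elements
of `l` exceed `c`. -/
lemma countP_le_of_kthLargest_lt (k : ℕ) (l : List ℝ) (c : ℝ) (h : kthLargest k l < c) :
    l.countP (fun a => decide (c < a)) ≤ k := by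
  have hperm : (l.mergeSort (fun a b => decide (b ≤ a))).Perm l := l.mergeSort_perm _
  rw [← hperm.countP_eq]
  by_cases hlen : (l.mergeSort (fun a b => decide (b ≤ a))).length ≤ k
  · exact le_trans (List.countP_le_length) hlen
  push_neg at hlen
  have hk : kthLargest k l = (l.mergeSort (fun a b => decide (b ≤ a)))[k] := by
    rw [kthLargest, List.getD_eq_getElem?_getD, List.getElem?_eq_getElem hlen]; rfl
  have hsplit : (l.mergeSort (fun a b => decide (b ≤ a))).countP (fun a => decide (c < a)) =
      ((l.mergeSort (fun a b => decide (b ≤ a))).take k).countP (fun a => decide (c < a)) +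
      ((l.mergeSort (fun a b => decide (b ≤ a))).drop k).countP (fun a => decide (c < a)) := by
    rw [← List.countP_append, List.take_append_drop]
  have h1 : ((l.mergeSort (fun a b => decide (b ≤ a))).take k).countP
      (fun a => decide (c < a)) ≤ k :=
    le_trans (List.countP_le_length) (by simp)
  have h2 : ((l.mergeSort (fun a b => decide (b ≤ a))).drop k).countP
      (fun a => decide (c < a)) = 0 := by
    rw [List.countP_eq_zero]
    intro a ha
    obtain ⟨m, hm, rfl⟩ := List.mem_iff_getElem.1 ha
    have hm' : k + m < (l.mergeSort (fun a b => decide (b ≤ a))).length := by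
      simp only [List.length_drop] at hm; omega
    rw [List.getElem_drop]
    have hkm : (l.mergeSort (fun a b => decide (b ≤ a)))[k + m]'hm'
        ≤ (l.mergeSort (fun a b => decide (b ≤ a)))[k] :=
      mergeSortDesc_anti l _ (Nat.le_add_right _ _)
    simp only [decide_eq_true_eq, not_lt]
    exact le_trans hkm (by rw [← hk]; exact le_of_lt h)
  omega

/-- If at most `k` elements of `l` exceed `c ≥ 0`, then the `(k+1)`-th largest element
of `l` is at most `c`. -/
lemma kthLargest_le (k : ℕ) (l : List ℝ) (c : ℝ) (hc : 0 ≤ c)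
    (h : l.countP (fun a => decide (c < a)) ≤ k) : kthLargest k l ≤ c := by
  by_contra hlt
  push_neg at hlt
  have hperm : (l.mergeSort (fun a b => decide (b ≤ a))).Perm l := l.mergeSort_perm _
  have hLl : (l.mergeSort (fun a b => decide (b ≤ a))).length = l.length :=
    List.length_mergeSort _
  by_cases hlen : (l.mergeSort (fun a b => decide (b ≤ a))).length ≤ k
  · rw [kthLargest, List.getD_eq_getElem?_getD, List.getElem?_eq_none hlen] at hlt
    simp at hlt; linarith
  push_neg at hlen
  have hk : kthLargest k l = (l.mergeSort (fun a b => decide (b ≤ a)))[k] := by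
    rw [kthLargest, List.getD_eq_getElem?_getD, List.getElem?_eq_getElem hlen]; rfl
  have hlen' : ((l.mergeSort (fun a b => decide (b ≤ a))).take (k+1)).length = k + 1 := by
    simp; omega
  have htake : ((l.mergeSort (fun a b => decide (b ≤ a))).take (k+1)).countP
      (fun a => decide (c < a)) = k + 1 := by
    have hall : ∀ a ∈ (l.mergeSort (fun a b => decide (b ≤ a))).take (k+1),
        (fun a => decide (c < a)) a = true := by
      intro a ha
      obtain ⟨m, hm, rfl⟩ := List.mem_iff_getElem.1 ha
      rw [List.getElem_take]
      have hmk : m ≤ k := by rw [hlen'] at hm; omega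
      have hle := mergeSortDesc_anti l hlen hmk
      simp only [decide_eq_true_eq]
      exact lt_of_lt_of_le (hk ▸ hlt) hle
    rw [List.countP_eq_length.2 hall, hlen']
  have hsplit : (l.mergeSort (fun a b => decide (b ≤ a))).countP (fun a => decide (c < a)) =
      ((l.mergeSort (fun a b => decide (b ≤ a))).take (k+1)).countP (fun a => decide (c < a)) +
      ((l.mergeSort (fun a b => decide (b ≤ a))).drop (k+1)).countP (fun a => decide (c < a)) := by
    rw [← List.countP_append, List.take_append_drop]
  have := hperm.countP_eq (fun a => decide (c < a))
  omega

lemma countP_range_eq (p : ℕ → Prop) [DecidablePred p] (n : ℕ) :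
    (List.range n).countP (fun i => decide (p i)) = ((Finset.range n).filter p).card := by
  rw [Finset.card, Finset.filter_val, Finset.range_val, Multiset.range,
    Multiset.filter_coe, Multiset.coe_card, List.countP_eq_length_filter]

/-- The doubling argument: if for every `t ∈ A` at most `k` members `i ≤ t` of `A`
have `v i > v t / 2`, then `∑_{t ∈ A} v t ≤ 2 k M` for any upper bound `M` of `v` on `A`. -/
lemma sum_le_of_filter_count (k : ℕ) (v : ℕ → ℝ) (hv : ∀ i, 0 ≤ v i) (A : Finset ℕ) :
    ∀ (M : ℝ), 0 ≤ M → (∀ t ∈ A, v t ≤ M) →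
      (∀ t ∈ A, ((A.filter fun i => i ≤ t ∧ v t / 2 < v i).card ≤ k)) →
      ∑ t ∈ A, v t ≤ 2 * k * M := by
  induction A using Finset.strongInduction with
  | _ A ih =>
    intro M hM hbd H
    rcases A.eq_empty_or_nonempty with rfl | hA
    · simp; positivity
    obtain ⟨t0, ht0, hvt0⟩ := Finset.exists_mem_eq_sup' hA v
    set M' := A.sup' hA v with hM'def
    have hM'le : M' ≤ M := Finset.sup'_le hA v hbd
    have hbd' : ∀ t ∈ A, v t ≤ M' := fun t ht => Finset.le_sup' v ht
    by_cases hM'pos : M' ≤ 0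
    · have hz : ∀ t ∈ A, v t = 0 := fun t ht =>
        le_antisymm (le_trans (hbd' t ht) hM'pos) (hv t)
      rw [Finset.sum_congr rfl hz, Finset.sum_const, smul_zero]
      positivity
    push_neg at hM'pos
    have ht0hi : M' / 2 < v t0 := by rw [← hvt0]; linarith
    set Ahi := A.filter (fun i => M' / 2 < v i) with hAhidef
    set Alo := A.filter (fun i => ¬ M' / 2 < v i) with hAlodef
    have hsplit : ∑ t ∈ Ahi, v t + ∑ t ∈ Alo, v t = ∑ t ∈ A, v t :=
      Finset.sum_filter_add_sum_filter_not A _ v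
    have hAhine : Ahi.Nonempty := ⟨t0, Finset.mem_filter.2 ⟨ht0, ht0hi⟩⟩
    set tm := Ahi.max' hAhine with htmdef
    have htmhi : tm ∈ Ahi := Ahi.max'_mem hAhine
    have htmA : tm ∈ A := (Finset.mem_filter.1 htmhi).1
    have hsub : Ahi ⊆ A.filter (fun i => i ≤ tm ∧ v tm / 2 < v i) := by
      intro i hi
      obtain ⟨hiA, hivi⟩ := Finset.mem_filter.1 hi
      refine Finset.mem_filter.2 ⟨hiA, Finset.le_max' _ _ hi, ?_⟩
      have : v tm ≤ M' := hbd' tm htmA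
      linarith
    have hcard : Ahi.card ≤ k := le_trans (Finset.card_le_card hsub) (H tm htmA)
    have hhi : ∑ t ∈ Ahi, v t ≤ (k : ℝ) * M' := by
      calc ∑ t ∈ Ahi, v t ≤ ∑ _t ∈ Ahi, M' :=
            Finset.sum_le_sum fun t ht => hbd' t (Finset.mem_filter.1 ht).1
        _ = Ahi.card * M' := by rw [Finset.sum_const, nsmul_eq_mul]
        _ ≤ (k : ℝ) * M' := by
            apply mul_le_mul_of_nonneg_right _ (le_of_lt hM'pos)
            exact_mod_cast hcard
    have hAloss : Alo ⊂ A := Finset.filter_ssubset.2 ⟨t0, ht0, by simpa using ht0hi⟩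
    have hlo : ∑ t ∈ Alo, v t ≤ 2 * k * (M' / 2) := by
      apply ih Alo hAloss (M'/2) (by linarith)
      · intro t ht
        have := (Finset.mem_filter.1 ht).2
        linarith [not_lt.1 this]
      · intro t ht
        have htA : t ∈ A := (Finset.mem_filter.1 ht).1
        refine le_trans (Finset.card_le_card ?_) (H t htA)
        exact Finset.filter_subset_filter _ (Finset.filter_subset _ _)
    have h2 : (0:ℝ) ≤ 2 * k := by positivity
    nlinarith [mul_le_mul_of_nonneg_left hM'le h2]

/-- if the linearized regret of the base algorithm on the passed rounds is
at most `B`, then the linearized robust regret on any set `S` with at most `k` outliers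
is at most `B + 4 D(u,S) G(S) (k+1)`. -/
theorem topk_filter_robust_regret
    {E : Type*} [NormedAddCommGroup E] [NormedSpace ℝ E] [FiniteDimensional ℝ E]
    (W : Set E) (hWne : W.Nonempty) (hWcomp : IsCompact W) (hWconv : Convex ℝ W)
    (T k : ℕ) (hT : 1 ≤ T)
    (w : ℕ → E) (hw : ∀ t ∈ Finset.range T, w t ∈ W)
    (g : ℕ → E →L[ℝ] ℝ)
    (S : Finset ℕ) (hS : S ⊆ Finset.range T) (hSk : T - S.card ≤ k)
    (u : E) (hu : u ∈ W)
    (B : ℝ) (hB : ∑ t ∈ topkPassed g k T, g t (w t - u) ≤ B) :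
    ∑ t ∈ S, g t (w t - u) ≤
      B + 4 * distMax g w u T S * gradMax g S * (k + 1) := by
  classical
  set P := topkPassed g k T with hPdef
  set G := gradMax g S with hGdef
  set D := distMax g w u T S with hDdef
  set f : ℕ → ℝ := fun t => g t (w t - u) with hfdef
  have hG0 : 0 ≤ G := NNReal.coe_nonneg _
  have hD0 : 0 ≤ D := NNReal.coe_nonneg _
  have hGS : ∀ t ∈ S, ‖g t‖ ≤ G := by
    intro t ht
    have h := Finset.le_sup (f := fun t => ‖g t‖₊) ht
    calc ‖g t‖ = ((‖g t‖₊ : NNReal) : ℝ) := (coe_nnnorm _).symm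
      _ ≤ G := NNReal.coe_le_coe.2 h
  have hDle : ∀ t ∈ Finset.range T, ‖g t‖ ≤ 2 * G → ‖w t - u‖ ≤ D := by
    intro t ht hgt
    have hmem : t ∈ (Finset.range T).filter (fun t => ‖g t‖ ≤ 2 * gradMax g S) :=
      Finset.mem_filter.2 ⟨ht, hgt⟩
    have h := Finset.le_sup (f := fun t => ‖w t - u‖₊) hmem
    calc ‖w t - u‖ = ((‖w t - u‖₊ : NNReal) : ℝ) := (coe_nnnorm _).symm
      _ ≤ D := NNReal.coe_le_coe.2 h
  have hcardout : (Finset.range T \ S).card ≤ k := by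
    rw [Finset.card_sdiff_of_subset hS, Finset.card_range]; exact hSk
  -- the threshold never exceeds G(S)
  have hthresh : ∀ t ∈ Finset.range T, topkThresh g k t ≤ G := by
    intro t ht
    apply kthLargest_le _ _ _ hG0
    rw [List.countP_map]
    have heq : ((fun a => decide (G < a)) ∘ fun s => ‖g s‖)
        = fun i => decide (G < ‖g i‖) := rfl
    rw [heq, countP_range_eq (fun i => G < ‖g i‖)]
    refine le_trans (Finset.card_le_card ?_) hcardout
    intro i hi
    obtain ⟨hi1, hi2⟩ := Finset.mem_filter.1 hi
    rw [Finset.mem_range] at hi1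
    refine Finset.mem_sdiff.2
      ⟨Finset.mem_range.2 (lt_of_lt_of_le hi1 (Finset.mem_range.1 ht)), ?_⟩
    intro hiS
    exact absurd (hGS i hiS) (not_le.2 hi2)
  -- filtered rounds see at most k earlier large gradients
  have hfilt : ∀ t ∈ Finset.range T, t ∉ P →
      ((Finset.range (t+1)).filter (fun i => ‖g t‖ / 2 < ‖g i‖)).card ≤ k := by
    intro t ht htP
    have hnot : ¬ ‖g t‖ ≤ 2 * topkThresh g k t := fun h =>
      htP (Finset.mem_filter.2 ⟨ht, h⟩)
    push_neg at hnot
    have hlt : kthLargest k ((List.range (t+1)).map fun s => ‖g s‖) < ‖g t‖ / 2 := by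
      rw [← topkThresh]
      linarith
    have hc := countP_le_of_kthLargest_lt k _ _ hlt
    rw [List.countP_map] at hc
    have heq : ((fun a => decide (‖g t‖ / 2 < a)) ∘ fun s => ‖g s‖)
        = fun i => decide (‖g t‖ / 2 < ‖g i‖) := rfl
    rw [heq, countP_range_eq (fun i => ‖g t‖ / 2 < ‖g i‖)] at hc
    exact hc
  -- decomposition of the sums
  have e1 : ∑ t ∈ S \ P, f t + ∑ t ∈ S ∩ P, f t = ∑ t ∈ S, f t := by
    rw [← Finset.sdiff_inter_self_left S P]
    exact Finset.sum_sdiff Finset.inter_subset_left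
  have e2 : ∑ t ∈ P \ S, f t + ∑ t ∈ S ∩ P, f t = ∑ t ∈ P, f t := by
    rw [Finset.inter_comm, ← Finset.sdiff_inter_self_left P S]
    exact Finset.sum_sdiff Finset.inter_subset_left
  -- bound on P \ S
  have hb1 : ∀ t ∈ P \ S, -(2 * G * D) ≤ f t := by
    intro t ht
    obtain ⟨htP, htS⟩ := Finset.mem_sdiff.1 ht
    obtain ⟨htT, hpass⟩ := Finset.mem_filter.1 htP
    have hgt : ‖g t‖ ≤ 2 * G := le_trans hpass (by linarith [hthresh t htT])
    have hwt : ‖w t - u‖ ≤ D := hDle t htT hgt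
    have h2 : |f t| ≤ ‖g t‖ * ‖w t - u‖ := by
      have := (g t).le_opNorm (w t - u)
      rwa [Real.norm_eq_abs] at this
    have h3 : ‖g t‖ * ‖w t - u‖ ≤ 2 * G * D :=
      mul_le_mul hgt hwt (norm_nonneg _) (by linarith)
    linarith [neg_abs_le (f t)]
  have hcardPS : (P \ S).card ≤ k :=
    le_trans (Finset.card_le_card
      (Finset.sdiff_subset_sdiff (Finset.filter_subset _ _) Finset.Subset.rfl)) hcardout
  have hsum1 : -((k : ℝ) * (2 * G * D)) ≤ ∑ t ∈ P \ S, f t := by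
    have h := Finset.card_nsmul_le_sum (P \ S) f (-(2 * G * D)) hb1
    rw [nsmul_eq_mul] at h
    have hck : ((P \ S).card : ℝ) ≤ (k : ℝ) := by exact_mod_cast hcardPS
    have h'' := mul_le_mul_of_nonneg_right hck (by positivity : (0:ℝ) ≤ 2 * G * D)
    nlinarith
  -- bound on S \ P via the doubling lemma
  have hsumnorm : ∑ t ∈ S \ P, ‖g t‖ ≤ 2 * k * G := by
    apply sum_le_of_filter_count k (fun t => ‖g t‖) (fun i => norm_nonneg _) (S \ P) G hG0
      (fun t ht => hGS t (Finset.mem_sdiff.1 ht).1)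
    intro t ht
    obtain ⟨htS, htP⟩ := Finset.mem_sdiff.1 ht
    refine le_trans (Finset.card_le_card ?_) (hfilt t (hS htS) htP)
    intro i hi
    simp only [Finset.mem_filter, Finset.mem_sdiff, Finset.mem_range] at hi ⊢
    exact ⟨Nat.lt_succ_of_le hi.2.1, hi.2.2⟩
  have hb2 : ∑ t ∈ S \ P, f t ≤ 2 * k * G * D := by
    have hstep : ∑ t ∈ S \ P, f t ≤ ∑ t ∈ S \ P, ‖g t‖ * D := by
      apply Finset.sum_le_sum
      intro t ht
      obtain ⟨htS, _⟩ := Finset.mem_sdiff.1 ht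
      have h1 : f t ≤ |f t| := le_abs_self _
      have h2 : |f t| ≤ ‖g t‖ * ‖w t - u‖ := by
        have := (g t).le_opNorm (w t - u)
        rwa [Real.norm_eq_abs] at this
      have h3 : ‖w t - u‖ ≤ D := hDle t (hS htS) (by linarith [hGS t htS, hG0])
      nlinarith [norm_nonneg (g t)]
    calc ∑ t ∈ S \ P, f t ≤ ∑ t ∈ S \ P, ‖g t‖ * D := hstep
      _ = (∑ t ∈ S \ P, ‖g t‖) * D := by rw [Finset.sum_mul]
      _ ≤ 2 * k * G * D := mul_le_mul_of_nonneg_right hsumnorm hD0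
  have hfin : (k : ℝ) * (2 * G * D) + 2 * k * G * D ≤ 4 * D * G * (k + 1) := by
    nlinarith [mul_nonneg hG0 hD0]
  linarith
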